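/- Let V and W be subspaces of ℝ^n and v a nonzero vector with nonzero projection P_W v onto W. Then θ(v, V) ≤ θ(v, W) + θ(P_W v, V), where θ denotes the angle between a vector and a subspace. -/

import Mathlib

open InnerProductGeometry Real

local notation "⟪" x ", " y "⟫" => @inner ℝ _ _ x y

lemma my_arccos_le_arccos {x y : ℝ} (h : x ≤ y) : Real.arccos y ≤ Real.arccos x := by
  unfold Real.arccos
  have := Real.monotone_arcsin h
  linarith

lemma my_angle_triangle {E : Type*} [NormedAddCommGroup E] [InnerProductSpace ℝ E]
    (x y z : E) (hx : x ≠ 0) (hy : y ≠ 0) (hz : z ≠ 0) :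
    angle x z ≤ angle x y + angle y z := by
  by_cases h : π ≤ angle x y + angle y z
  · exact le_trans (angle_le_pi x z) h
  push_neg at h
  have h0 : (0:ℝ) ≤ angle x y + angle y z := add_nonneg (angle_nonneg _ _) (angle_nonneg _ _)
  have hnx : (0:ℝ) < ‖x‖ := norm_pos_iff.2 hx
  have hny : (0:ℝ) < ‖y‖ := norm_pos_iff.2 hy
  have hnz : (0:ℝ) < ‖z‖ := norm_pos_iff.2 hz
  have hXZ : ⟪(‖y‖^2:ℝ) • x - ⟪x,y⟫ • y, (‖y‖^2:ℝ) • z - ⟪y,z⟫ • y⟫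
      = ‖y‖^2 * (⟪x,z⟫ * ‖y‖^2 - ⟪x,y⟫ * ⟪y,z⟫) := by
    simp only [inner_sub_left, inner_sub_right, real_inner_smul_left,
      real_inner_smul_right, real_inner_self_eq_norm_sq]
    ring
  have hXX : ⟪(‖y‖^2:ℝ) • x - ⟪x,y⟫ • y, (‖y‖^2:ℝ) • x - ⟪x,y⟫ • y⟫
      = ‖y‖^2 * (‖x‖^2 * ‖y‖^2 - ⟪x,y⟫^2) := by
    simp only [inner_sub_left, inner_sub_right, real_inner_smul_left,
      real_inner_smul_right, real_inner_self_eq_norm_sq, norm_smul, mul_pow,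
      Real.norm_eq_abs, sq_abs]
    rw [real_inner_comm y x]
    ring
  have hZZ : ⟪(‖y‖^2:ℝ) • z - ⟪y,z⟫ • y, (‖y‖^2:ℝ) • z - ⟪y,z⟫ • y⟫
      = ‖y‖^2 * (‖y‖^2 * ‖z‖^2 - ⟪y,z⟫^2) := by
    simp only [inner_sub_left, inner_sub_right, real_inner_smul_left,
      real_inner_smul_right, real_inner_self_eq_norm_sq, norm_smul, mul_pow,
      Real.norm_eq_abs, sq_abs]
    rw [real_inner_comm z y]
    ring
  have hcs := real_inner_mul_inner_self_le ((‖y‖^2:ℝ) • x - ⟪x,y⟫ • y) ((‖y‖^2:ℝ) • z - ⟪y,z⟫ • y)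
  rw [hXZ, hXX, hZZ] at hcs
  have hP : (0:ℝ) ≤ ‖x‖^2 * ‖y‖^2 - ⟪x,y⟫^2 := by
    have := real_inner_mul_inner_self_le x y
    rw [real_inner_self_eq_norm_sq, real_inner_self_eq_norm_sq] at this
    nlinarith [this]
  have hQ : (0:ℝ) ≤ ‖y‖^2 * ‖z‖^2 - ⟪y,z⟫^2 := by
    have := real_inner_mul_inner_self_le y z
    rw [real_inner_self_eq_norm_sq, real_inner_self_eq_norm_sq] at this
    nlinarith [this]
  have hsq : (⟪x,y⟫ * ⟪y,z⟫ - ⟪x,z⟫ * ‖y‖^2)^2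
      ≤ (‖x‖^2 * ‖y‖^2 - ⟪x,y⟫^2) * (‖y‖^2 * ‖z‖^2 - ⟪y,z⟫^2) := by
    have h4 : (0:ℝ) < ‖y‖^2 * ‖y‖^2 := by positivity
    have e1' : (‖y‖^2 * (⟪x,z⟫ * ‖y‖^2 - ⟪x,y⟫ * ⟪y,z⟫)) * (‖y‖^2 * (⟪x,z⟫ * ‖y‖^2 - ⟪x,y⟫ * ⟪y,z⟫))
        = (‖y‖^2 * ‖y‖^2) * ((⟪x,y⟫ * ⟪y,z⟫ - ⟪x,z⟫ * ‖y‖^2)^2) := by ring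
    have e2' : ‖y‖^2 * (‖x‖^2 * ‖y‖^2 - ⟪x,y⟫^2) * (‖y‖^2 * (‖y‖^2 * ‖z‖^2 - ⟪y,z⟫^2))
        = (‖y‖^2 * ‖y‖^2) * ((‖x‖^2 * ‖y‖^2 - ⟪x,y⟫^2) * (‖y‖^2 * ‖z‖^2 - ⟪y,z⟫^2)) := by ring
    rw [e1', e2'] at hcs
    exact le_of_mul_le_mul_left hcs h4
  have hkey2 : ⟪x,y⟫ * ⟪y,z⟫ - ⟪x,z⟫ * ‖y‖^2 ≤
      Real.sqrt (‖x‖^2 * ‖y‖^2 - ⟪x,y⟫^2) * Real.sqrt (‖y‖^2 * ‖z‖^2 - ⟪y,z⟫^2) := by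
    rw [← Real.sqrt_mul hP]
    calc ⟪x,y⟫ * ⟪y,z⟫ - ⟪x,z⟫ * ‖y‖^2 ≤ |⟪x,y⟫ * ⟪y,z⟫ - ⟪x,z⟫ * ‖y‖^2| := le_abs_self _
      _ = Real.sqrt ((⟪x,y⟫ * ⟪y,z⟫ - ⟪x,z⟫ * ‖y‖^2)^2) := (Real.sqrt_sq_eq_abs _).symm
      _ ≤ _ := Real.sqrt_le_sqrt hsq
  have e1 : Real.cos (angle x y) * (‖x‖ * ‖y‖) = ⟪x,y⟫ := cos_angle_mul_norm_mul_norm x y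
  have e2 : Real.cos (angle y z) * (‖y‖ * ‖z‖) = ⟪y,z⟫ := cos_angle_mul_norm_mul_norm y z
  have e3 : Real.cos (angle x z) * (‖x‖ * ‖z‖) = ⟪x,z⟫ := cos_angle_mul_norm_mul_norm x z
  have s1 : Real.sin (angle x y) * (‖x‖ * ‖y‖) = Real.sqrt (‖x‖^2 * ‖y‖^2 - ⟪x,y⟫^2) := by
    rw [sin_angle_mul_norm_mul_norm, real_inner_self_eq_norm_sq, real_inner_self_eq_norm_sq]
    ring_nf
  have s2 : Real.sin (angle y z) * (‖y‖ * ‖z‖) = Real.sqrt (‖y‖^2 * ‖z‖^2 - ⟪y,z⟫^2) := by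
    rw [sin_angle_mul_norm_mul_norm, real_inner_self_eq_norm_sq, real_inner_self_eq_norm_sq]
    ring_nf
  have key : Real.cos (angle x y + angle y z) ≤ Real.cos (angle x z) := by
    have hmul : Real.cos (angle x y + angle y z) * ((‖x‖ * ‖y‖) * (‖y‖ * ‖z‖))
        ≤ Real.cos (angle x z) * ((‖x‖ * ‖y‖) * (‖y‖ * ‖z‖)) := by
      rw [Real.cos_add]
      have expand : (Real.cos (angle x y) * Real.cos (angle y z)
            - Real.sin (angle x y) * Real.sin (angle y z)) * ((‖x‖ * ‖y‖) * (‖y‖ * ‖z‖))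
          = (Real.cos (angle x y) * (‖x‖ * ‖y‖)) * (Real.cos (angle y z) * (‖y‖ * ‖z‖))
            - (Real.sin (angle x y) * (‖x‖ * ‖y‖)) * (Real.sin (angle y z) * (‖y‖ * ‖z‖)) := by
        ring
      rw [expand, e1, e2, s1, s2]
      have : Real.cos (angle x z) * ((‖x‖ * ‖y‖) * (‖y‖ * ‖z‖))
          = ⟪x,z⟫ * ‖y‖^2 := by
        rw [show Real.cos (angle x z) * ((‖x‖ * ‖y‖) * (‖y‖ * ‖z‖))
            = (Real.cos (angle x z) * (‖x‖ * ‖z‖)) * ‖y‖^2 by ring, e3]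
      rw [this]
      linarith [hkey2]
    have hpos : (0:ℝ) < (‖x‖ * ‖y‖) * (‖y‖ * ‖z‖) := by positivity
    exact le_of_mul_le_mul_right hmul hpos
  calc angle x z = Real.arccos (Real.cos (angle x z)) :=
        (Real.arccos_cos (angle_nonneg _ _) (angle_le_pi _ _)).symm
    _ ≤ Real.arccos (Real.cos (angle x y + angle y z)) := my_arccos_le_arccos key
    _ = _ := Real.arccos_cos h0 h.le

/-- The angle between a nonzero vector `v` and a subspace `V`,
defined as `arccos (‖P_V v‖ / ‖v‖)`. -/
noncomputable def angleToSubspace {n : ℕ}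
    (V : Submodule ℝ (EuclideanSpace ℝ (Fin n)))
    (v : EuclideanSpace ℝ (Fin n)) : ℝ :=
  Real.arccos (‖((Submodule.orthogonalProjectionOnto V v : V) : EuclideanSpace ℝ (Fin n))‖ / ‖v‖)

lemma angleToSubspace_eq_angle {n : ℕ} (U : Submodule ℝ (EuclideanSpace ℝ (Fin n)))
    (v : EuclideanSpace ℝ (Fin n)) (hv : v ≠ 0)
    (hP : ((Submodule.orthogonalProjectionOnto U v : U) : EuclideanSpace ℝ (Fin n)) ≠ 0) :
    angleToSubspace U v
      = angle v ((Submodule.orthogonalProjectionOnto U v : U) : EuclideanSpace ℝ (Fin n)) := by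
  set w : EuclideanSpace ℝ (Fin n) := ((Submodule.orthogonalProjectionOnto U v : U) : EuclideanSpace ℝ (Fin n)) with hwdef
  have hvw : ⟪v, w⟫ = ‖w‖^2 := by
    have h0 : ⟪v - w, w⟫ = 0 :=
      Submodule.starProjection_inner_eq_zero v w (Submodule.orthogonalProjectionOnto U v).2
    rw [inner_sub_left] at h0
    have : ⟪v, w⟫ = ⟪w, w⟫ := by linarith [h0]
    rw [this, real_inner_self_eq_norm_sq]
  have hnv : (0:ℝ) < ‖v‖ := norm_pos_iff.2 hv
  have hnw : (0:ℝ) < ‖w‖ := norm_pos_iff.2 hP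
  unfold angleToSubspace InnerProductGeometry.angle
  rw [← hwdef, hvw]
  congr 1
  field_simp

lemma angleToSubspace_le_angle {n : ℕ} (U : Submodule ℝ (EuclideanSpace ℝ (Fin n)))
    (v u : EuclideanSpace ℝ (Fin n)) (hv : v ≠ 0) (hu : u ≠ 0) (hmem : u ∈ U) :
    angleToSubspace U v ≤ angle v u := by
  have hnv : (0:ℝ) < ‖v‖ := norm_pos_iff.2 hv
  have hnu : (0:ℝ) < ‖u‖ := norm_pos_iff.2 hu
  set w : EuclideanSpace ℝ (Fin n) := ((Submodule.orthogonalProjectionOnto U v : U) : EuclideanSpace ℝ (Fin n)) with hwdef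
  have hvu : ⟪v, u⟫ = ⟪w, u⟫ := by
    have h0 : ⟪v - w, u⟫ = 0 := Submodule.starProjection_inner_eq_zero v u hmem
    rw [inner_sub_left] at h0
    linarith [h0]
  have hcos : Real.cos (angle v u) ≤ ‖w‖ / ‖v‖ := by
    rw [InnerProductGeometry.cos_angle, hvu]
    have h1 : ⟪w, u⟫ ≤ ‖w‖ * ‖u‖ := real_inner_le_norm w u
    rw [div_le_div_iff₀ (by positivity) hnv]
    calc ⟪w, u⟫ * ‖v‖ ≤ ‖w‖ * ‖u‖ * ‖v‖ := by nlinarith [h1, hnv]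
      _ = ‖w‖ * (‖v‖ * ‖u‖) := by ring
  calc angleToSubspace U v = Real.arccos (‖w‖ / ‖v‖) := rfl
    _ ≤ Real.arccos (Real.cos (angle v u)) := my_arccos_le_arccos hcos
    _ = angle v u := Real.arccos_cos (angle_nonneg _ _) (angle_le_pi _ _)

/-- Upper-bound half of Theorem 2 of the paper: `θ ≤ θ̂ + θ₂*`, i.e. for subspaces
`V, W` of `ℝⁿ` and any nonzero `v` with `P_W v ≠ 0`,
`θ(v, V) ≤ θ(v, W) + θ(P_W v, V)`. -/
theorem angleToSubspace_le_add' (n : ℕ)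
    (V W : Submodule ℝ (EuclideanSpace ℝ (Fin n)))
    (v : EuclideanSpace ℝ (Fin n)) (hv : v ≠ 0)
    (hPv : ((Submodule.orthogonalProjectionOnto W v : W) : EuclideanSpace ℝ (Fin n)) ≠ 0) :
    angleToSubspace V v ≤
      angleToSubspace W v +
        angleToSubspace V ((Submodule.orthogonalProjectionOnto W v : W) : EuclideanSpace ℝ (Fin n)) := by
  set w : EuclideanSpace ℝ (Fin n) := ((Submodule.orthogonalProjectionOnto W v : W) : EuclideanSpace ℝ (Fin n)) with hwdef
  by_cases hu : ((Submodule.orthogonalProjectionOnto V w : V) : EuclideanSpace ℝ (Fin n)) = 0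
  · have h1 : angleToSubspace V w = π / 2 := by
      unfold angleToSubspace
      rw [hu]
      simp [Real.arccos_zero]
    have h2 : angleToSubspace V v ≤ π / 2 :=
      Real.arccos_le_pi_div_two.2 (div_nonneg (norm_nonneg _) (norm_nonneg _))
    have h3 : 0 ≤ angleToSubspace W v := Real.arccos_nonneg _
    rw [h1]
    linarith
  · set u : EuclideanSpace ℝ (Fin n) := ((Submodule.orthogonalProjectionOnto V w : V) : EuclideanSpace ℝ (Fin n)) with hudef
    calc angleToSubspace V v ≤ angle v u :=
          angleToSubspace_le_angle V v u hv hu (Submodule.orthogonalProjectionOnto V w).2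
      _ ≤ angle v w + angle w u := my_angle_triangle v w u hv hPv hu
      _ = angleToSubspace W v + angleToSubspace V w := by
          rw [angleToSubspace_eq_angle W v hv hPv, angleToSubspace_eq_angle V w hPv hu]
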